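/- Let (X_i)_{i≥1} be independent and identically distributed E-valued random variables with common law ν. Let (f_n)_{n≥1}, f and g be measurable real-valued functions on E such that f_n converges pointwise to f, |f_n| ≤ g for every n ≥ 1, and ∫ g² dν < ∞. Then √n · ( (1/n)·Σ_{i=1}^n { f_n(X_i) − f(X_i) } − ∫ (f_n − f) dν ) → 0 in probability as n → ∞. -/

import Mathlib

open MeasureTheory Filter ProbabilityTheory

lemma variance_comp_measurePreserving
    {E : Type*} [MeasurableSpace E] {ν : Measure E} [IsProbabilityMeasure ν]
    {Ω : Type*} [MeasurableSpace Ω] {P : Measure Ω} [IsProbabilityMeasure P]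
    {X : Ω → E} (hX : MeasurePreserving X P ν)
    {h : E → ℝ} (hh : Measurable h) (hL2 : MemLp h 2 ν) :
    variance (fun ω => h (X ω)) P = variance h ν := by
  have hL2' : MemLp (fun ω => h (X ω)) 2 P := hL2.comp_measurePreserving hX
  rw [variance_eq_sub hL2', variance_eq_sub hL2]
  have h1 : ∫ ω, h (X ω) ∂P = ∫ x, h x ∂ν := by
    rw [← hX.map_eq, integral_map hX.measurable.aemeasurable hh.aestronglyMeasurable]
  have h2 : ∫ ω, (h (X ω)) ^ 2 ∂P = ∫ x, (h x) ^ 2 ∂ν := by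
    rw [← hX.map_eq, integral_map hX.measurable.aemeasurable
      ((hh.pow_const 2).aestronglyMeasurable)]
  simp only [Pi.pow_apply] at *
  rw [h1, h2]

/-- Let `(X i)` be IID with common law `ν`, and let `(f n)`, `flim`, `g`
be measurable real functions with `f n → flim` pointwise, `|f n| ≤ g` and `∫ g² dν < ∞`.
Then `√n ( (1/n) ∑_{i<n} (f n (X i) - flim (X i)) - ∫ (f n - flim) dν ) → 0` in
probability. -/
theorem stmt6
    {E : Type*} [MeasurableSpace E] (ν : Measure E) [IsProbabilityMeasure ν]
    {Ω : Type*} [MeasurableSpace Ω] (P : Measure Ω) [IsProbabilityMeasure P]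
    (X : ℕ → Ω → E)
    (hXmeas : ∀ i, Measurable (X i))
    (hXdist : ∀ i, Measure.map (X i) P = ν)
    (hXindep : iIndepFun X P)
    (f : ℕ → E → ℝ) (flim g : E → ℝ)
    (hfmeas : ∀ n, Measurable (f n))
    (hflimmeas : Measurable flim)
    (hgmeas : Measurable g)
    (hlim : ∀ x, Tendsto (fun n => f n x) atTop (nhds (flim x)))
    (hdom : ∀ n x, |f n x| ≤ g x)
    (hg2 : Integrable (fun x => (g x) ^ 2) ν) :
    ∀ δ > (0 : ℝ), Tendsto (fun (n : ℕ) => P {ω | δ <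
        |Real.sqrt n * ((n : ℝ)⁻¹ * ∑ i ∈ Finset.range n,
            (f n (X i ω) - flim (X i ω)) - ∫ x, (f n x - flim x) ∂ν)|})
      atTop (nhds 0) := by
  intro δ hδ
  set h : ℕ → E → ℝ := fun n x => f n x - flim x with hh_def
  have hhmeas : ∀ n, Measurable (h n) := fun n => (hfmeas n).sub hflimmeas
  have hglim : ∀ x, |flim x| ≤ g x := fun x =>
    le_of_tendsto ((hlim x).abs) (Eventually.of_forall fun n => hdom n x)
  have hhbound : ∀ n x, |h n x| ≤ 2 * g x := fun n x => by
    calc |h n x| ≤ |f n x| + |flim x| := abs_sub _ _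
    _ ≤ g x + g x := add_le_add (hdom n x) (hglim x)
    _ = 2 * g x := by ring
  have hbound_int : Integrable (fun x => 4 * (g x) ^ 2) ν := hg2.const_mul 4
  have hsq_le : ∀ n x, ‖(h n x) ^ 2‖ ≤ 4 * (g x) ^ 2 := fun n x => by
    rw [Real.norm_eq_abs, abs_of_nonneg (sq_nonneg _)]
    nlinarith [hhbound n x, abs_nonneg (h n x), sq_abs (h n x), (hdom n x).trans (le_abs_self (g x)) |>.trans (le_refl _)]
  have hh_int_sq : ∀ n, Integrable (fun x => (h n x) ^ 2) ν := fun n =>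
    (hbound_int.mono ((hhmeas n).pow_const 2).aestronglyMeasurable
      (Eventually.of_forall fun x => by
        simpa [abs_of_nonneg (sq_nonneg (g _))] using hsq_le n x))
  have hhL2 : ∀ n, MemLp (h n) 2 ν := fun n =>
    (memLp_two_iff_integrable_sq (hhmeas n).aestronglyMeasurable).2 (hh_int_sq n)
  -- dominated convergence: ∫ (h n)² → 0
  have hDCT : Tendsto (fun n => ∫ x, (h n x) ^ 2 ∂ν) atTop (nhds 0) := by
    have := tendsto_integral_of_dominated_convergence (μ := ν)
      (F := fun n x => (h n x) ^ 2) (f := fun _ => (0 : ℝ))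
      (fun x => 4 * (g x) ^ 2)
      (fun n => ((hhmeas n).pow_const 2).aestronglyMeasurable)
      hbound_int
      (fun n => Eventually.of_forall fun x => hsq_le n x)
      (Eventually.of_forall fun x => by
        have : Tendsto (fun n => h n x) atTop (nhds 0) := by
          simpa using (hlim x).sub_const (flim x)
        simpa using (this.pow 2))
    simpa using this
  have hmp : ∀ i, MeasurePreserving (X i) P ν := fun i => ⟨hXmeas i, hXdist i⟩
  -- upper bound sequence
  have hUB : Tendsto (fun n => ENNReal.ofReal ((∫ x, (h n x) ^ 2 ∂ν) / δ ^ 2))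
      atTop (nhds 0) := by
    have : Tendsto (fun n => (∫ x, (h n x) ^ 2 ∂ν) / δ ^ 2) atTop (nhds 0) := by
      simpa using hDCT.div_const (δ ^ 2)
    simpa [Function.comp_def] using (ENNReal.continuous_ofReal.tendsto 0).comp this
  refine tendsto_of_tendsto_of_tendsto_of_le_of_le' tendsto_const_nhds hUB
    (Eventually.of_forall fun _ => zero_le) ?_
  filter_upwards [eventually_ge_atTop 1] with n hn
  have hn0 : (0 : ℝ) < n := by exact_mod_cast hn
  have hsqrt : (0 : ℝ) < Real.sqrt n := Real.sqrt_pos.2 hn0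
  set μn : ℝ := ∫ x, h n x ∂ν with hμn
  set Y : ℕ → Ω → ℝ := fun i ω => h n (X i ω) with hY
  have hYL2 : ∀ i, MemLp (Y i) 2 P := fun i => (hhL2 n).comp_measurePreserving (hmp i)
  set T : Ω → ℝ := fun ω => ∑ i ∈ Finset.range n, Y i ω with hT
  have hEY : ∀ i, ∫ ω, Y i ω ∂P = μn := fun i => by
    rw [hμn, ← hXdist i, integral_map (hXmeas i).aemeasurable
      (hhmeas n).aestronglyMeasurable]
  have hET : ∫ ω, T ω ∂P = n * μn := by
    rw [hT]
    rw [integral_finset_sum _ (fun i _ => (hYL2 i).integrable one_le_two)]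
    simp [hEY, Finset.sum_const]
  have hTL2 : MemLp T 2 P := by
    have h1 := memLp_finset_sum' (Finset.range n) (f := Y) (fun i _ => hYL2 i)
    convert h1 using 1
    ext ω
    simp only [hT, Finset.sum_apply]
  have hVarT : variance T P = n * variance (h n) ν := by
    have hind : Set.Pairwise ↑(Finset.range n) fun i j => IndepFun (Y i) (Y j) P := by
      intro i _ j _ hij
      exact (hXindep.indepFun hij).comp (hhmeas n) (hhmeas n)
    have hs : variance (∑ i ∈ Finset.range n, Y i) P
        = ∑ i ∈ Finset.range n, variance (Y i) P :=
      IndepFun.variance_sum (fun i _ => hYL2 i) hind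
    have hvi : ∀ i, variance (Y i) P = variance (h n) ν := fun i =>
      variance_comp_measurePreserving (hmp i) (hhmeas n) (hhL2 n)
    have hTeq : T = ∑ i ∈ Finset.range n, Y i := by ext ω; simp [hT]
    rw [hTeq, hs]
    simp [hvi, Finset.sum_const]
  -- Chebyshev
  have hcheb := meas_ge_le_variance_div_sq (μ := P) hTL2
    (c := δ * Real.sqrt n) (mul_pos hδ hsqrt)
  have hsub : {ω | δ < |Real.sqrt n * ((n : ℝ)⁻¹ * ∑ i ∈ Finset.range n,
        (f n (X i ω) - flim (X i ω)) - ∫ x, (f n x - flim x) ∂ν)|}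
      ⊆ {ω | δ * Real.sqrt n ≤ |T ω - ∫ ω, T ω ∂P|} := by
    intro ω hω
    simp only [Set.mem_setOf_eq] at hω ⊢
    rw [hET]
    have hTω : (∑ i ∈ Finset.range n, (f n (X i ω) - flim (X i ω))) = T ω := by
      simp [hT, hY, hh_def]
    have hkey : Real.sqrt n * ((n : ℝ)⁻¹ * T ω - μn)
        = (T ω - n * μn) / Real.sqrt n := by
      have hns : Real.sqrt n * Real.sqrt n = n := Real.mul_self_sqrt hn0.le
      rw [eq_div_iff hsqrt.ne']
      calc Real.sqrt n * ((n : ℝ)⁻¹ * T ω - μn) * Real.sqrt n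
          = (Real.sqrt n * Real.sqrt n) * ((n : ℝ)⁻¹ * T ω - μn) := by ring
        _ = (n : ℝ) * ((n : ℝ)⁻¹ * T ω - μn) := by rw [hns]
        _ = T ω - n * μn := by
            rw [mul_sub, ← mul_assoc, mul_inv_cancel₀ hn0.ne', one_mul]
    rw [hTω] at hω
    rw [show (∫ x, (f n x - flim x) ∂ν) = μn from rfl, hkey] at hω
    rw [abs_div, abs_of_pos hsqrt, lt_div_iff₀ hsqrt] at hω
    exact hω.le
  have hvar_le : variance (h n) ν ≤ ∫ x, (h n x) ^ 2 ∂ν := by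
    rw [variance_eq_sub (hhL2 n)]
    simp only [Pi.pow_apply]
    nlinarith [sq_nonneg (∫ x, h n x ∂ν)]
  calc P {ω | δ < |Real.sqrt n * ((n : ℝ)⁻¹ * ∑ i ∈ Finset.range n,
        (f n (X i ω) - flim (X i ω)) - ∫ x, (f n x - flim x) ∂ν)|}
      ≤ P {ω | δ * Real.sqrt n ≤ |T ω - ∫ ω, T ω ∂P|} := measure_mono hsub
    _ ≤ ENNReal.ofReal (variance T P / (δ * Real.sqrt n) ^ 2) := hcheb
    _ ≤ ENNReal.ofReal ((∫ x, (h n x) ^ 2 ∂ν) / δ ^ 2) := by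
        apply ENNReal.ofReal_le_ofReal
        rw [hVarT]
        have hs2 : (δ * Real.sqrt n) ^ 2 = δ ^ 2 * n := by
          rw [mul_pow, Real.sq_sqrt hn0.le]
        rw [hs2]
        rw [div_le_div_iff₀ (by positivity) (by positivity)]
        calc (n : ℝ) * variance (h n) ν * δ ^ 2
            ≤ (n : ℝ) * (∫ x, (h n x) ^ 2 ∂ν) * δ ^ 2 := by
              apply mul_le_mul_of_nonneg_right _ (sq_nonneg δ)
              exact mul_le_mul_of_nonneg_left hvar_le hn0.le
          _ = (∫ x, (h n x) ^ 2 ∂ν) * (δ ^ 2 * n) := by ring
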